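/- Let R be a ring and let M be a nonzero left R-module that is virtually semisimple. If M = M₁ ⊕ M₂ is an internal direct sum decomposition of M into submodules M₁ and M₂ such that every R-linear map from M₁ to M₂ is zero, then M₂ is a virtually semisimple R-module. -/

import Mathlib

universe u v w

/-- A left `R`-module `M` is *virtually semisimple* if every submodule of `M` is
isomorphic, as an `R`-module, to a direct summand of `M`. -/
def IsVirtuallySemisimple (R : Type u) [Ring R] (M : Type v) [AddCommGroup M] [Module R M] :
    Prop :=
  ∀ N : Submodule R M, ∃ K : Submodule R M, (∃ K' : Submodule R M, IsCompl K K') ∧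
    Nonempty (N ≃ₗ[R] K)

/-- A module is *completely virtually semisimple* if every submodule is virtually semisimple. -/
def IsCompletelyVirtuallySemisimple (R : Type u) [Ring R] (M : Type v) [AddCommGroup M]
    [Module R M] : Prop :=
  ∀ N : Submodule R M, IsVirtuallySemisimple R N


/-- If `M` is a nonzero virtually semisimple module and `M = M₁ ⊕ M₂` is an internal direct
sum decomposition such that every `R`-linear map `M₁ → M₂` is zero, then `M₂` is a virtually
semisimple `R`-module. -/
theorem stmt_0 (R : Type u) [Ring R] (M : Type v) [AddCommGroup M] [Module R M]
    [Nontrivial M] (hM : IsVirtuallySemisimple R M)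
    (M₁ M₂ : Submodule R M) (hcompl : IsCompl M₁ M₂)
    (hhom : ∀ f : M₁ →ₗ[R] M₂, f = 0) :
    IsVirtuallySemisimple R M₂ := by
  intro N
  -- view N as a submodule of M
  set N' : Submodule R M := N.map M₂.subtype with hN'
  obtain ⟨K, ⟨K', hKK'⟩, ⟨e⟩⟩ := hM N'
  have hN'le : N' ≤ M₂ := Submodule.map_subtype_le _ _
  -- the hom M₁ → M₂ : include, project onto K, transport via e.symm, include into M₂
  set f : M₁ →ₗ[R] M₂ :=
    (Submodule.inclusion hN'le) ∘ₗ e.symm.toLinearMap ∘ₗ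
      (K.linearProjOfIsCompl K' hKK') ∘ₗ M₁.subtype with hf
  have hf0 := hhom f
  have hM₁K' : M₁ ≤ K' := by
    intro x hx
    have hfx : f ⟨x, hx⟩ = 0 := by rw [hf0]; rfl
    have : e.symm (K.linearProjOfIsCompl K' hKK' x) = 0 := by
      have := congrArg Subtype.val hfx
      simp only [hf, LinearMap.coe_comp, Function.comp_apply, Submodule.coe_subtype,
        Submodule.coe_inclusion] at this
      exact Subtype.ext this
    have h0 : K.linearProjOfIsCompl K' hKK' x = 0 := by
      simpa using congrArg e this
    exact (Submodule.linearProjOfIsCompl_apply_eq_zero_iff hKK').mp h0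
  -- projection onto M₂ along M₁
  set π : M →ₗ[R] M₂ := M₂.linearProjOfIsCompl M₁ hcompl.symm with hπ
  have hπinj : Function.Injective (π ∘ₗ K.subtype) := by
    intro a b hab
    have : π ((a : M) - b) = 0 := by
      have : π (a : M) = π (b : M) := hab
      simp [map_sub, this]
    have hmem : ((a : M) - b) ∈ M₁ :=
      (Submodule.linearProjOfIsCompl_apply_eq_zero_iff hcompl.symm).mp this
    have hK : ((a : M) - b) ∈ K := sub_mem a.2 b.2
    have : ((a : M) - b) ∈ K ⊓ K' := ⟨hK, hM₁K' hmem⟩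
    rw [hKK'.inf_eq_bot] at this
    exact Subtype.ext (by simpa [sub_eq_zero] using this)
  have hsub : ∀ x : M, x - (π x : M) ∈ M₁ := by
    intro x
    have heq := Submodule.projection_add_projection_eq_self hcompl.symm x
    have h2 : x - (π x : M) = (M₁.linearProjOfIsCompl M₂ hcompl x : M) :=
      sub_eq_of_eq_add' heq.symm
    rw [h2]; exact Submodule.coe_mem _
  refine ⟨LinearMap.range (π ∘ₗ K.subtype), ⟨K'.comap M₂.subtype, ?_, ?_⟩,
    ⟨((Submodule.equivMapOfInjective M₂.subtype Subtype.val_injective N).trans e).trans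
      (LinearEquiv.ofInjective _ hπinj)⟩⟩
  · -- disjoint
    rw [disjoint_iff_inf_le]
    rintro x ⟨⟨k, hk, rfl⟩, hx2⟩
    have hk' : (k : M) ∈ K' := by
      have h1 : (π k : M) ∈ K' := hx2
      have h2 : (k : M) - (π (k : M) : M) ∈ M₁ := hsub k
      have h3 : (k : M) = ((k : M) - (π (k : M) : M)) + (π (k : M) : M) := by abel
      rw [h3]; exact add_mem (hM₁K' h2) h1
    have : (k : M) ∈ K ⊓ K' := ⟨k.2, hk'⟩
    rw [hKK'.inf_eq_bot] at this
    simp only [Submodule.mem_bot] at this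
    have : π (k : M) = 0 := by rw [this]; simp
    simpa [Submodule.mem_bot] using Subtype.ext (congrArg Subtype.val this)
  · -- codisjoint
    rw [codisjoint_iff_le_sup]
    rintro ⟨m, hm⟩ -
    obtain ⟨k, k', hk, hk', hsum⟩ :=
      Submodule.codisjoint_iff_exists_add_eq.mp hKK'.codisjoint m
    have hπk' : (π k' : M) ∈ K' := by
      have h2 : k' - (π k' : M) ∈ M₁ := hsub k'
      have h3 : (π k' : M) = k' - (k' - (π k' : M)) := by abel
      rw [h3]; exact sub_mem hk' (hM₁K' h2)
    have hmπ : (⟨m, hm⟩ : M₂) = π m := by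
      symm; exact Subtype.ext (congrArg Subtype.val
        (Submodule.linearProjOfIsCompl_apply_left hcompl.symm ⟨m, hm⟩))
    rw [hmπ, ← hsum, map_add]
    exact Submodule.add_mem_sup ⟨⟨k, hk⟩, rfl⟩ hπk'
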